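/- A countable group is left-orderable if and only if it embeds into the group of orientation-preserving homeomorphisms of ℝ. -/

import Mathlib

noncomputable section CLOIE

namespace CLOIE

/-- Type synonym for `ℝ` to carry a well-order. -/
def WOR : Type := ℝ

/-- Canonical extension of an order isomorphism of `ℚ` to a map `ℝ → ℝ`. -/
def rext (f : ℚ ≃o ℚ) (x : ℝ) : ℝ :=
  sSup ((fun q : ℚ => (f q : ℝ)) '' {q : ℚ | (q : ℝ) ≤ x})

lemma rext_set_nonempty (f : ℚ ≃o ℚ) (x : ℝ) :
    ((fun q : ℚ => (f q : ℝ)) '' {q : ℚ | (q : ℝ) ≤ x}).Nonempty := by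
  obtain ⟨q, hq⟩ := exists_rat_lt x
  exact ⟨f q, ⟨q, hq.le, rfl⟩⟩

lemma rext_set_bdd (f : ℚ ≃o ℚ) (x : ℝ) :
    BddAbove ((fun q : ℚ => (f q : ℝ)) '' {q : ℚ | (q : ℝ) ≤ x}) := by
  obtain ⟨r, hr⟩ := exists_rat_gt x
  refine ⟨(f r : ℝ), ?_⟩
  rintro _ ⟨q, hq, rfl⟩
  have hqr : q ≤ r := by exact_mod_cast le_trans hq hr.le
  show ((f q : ℚ) : ℝ) ≤ ((f r : ℚ) : ℝ)
  exact_mod_cast f.monotone hqr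

lemma rext_le (f : ℚ ≃o ℚ) (x : ℝ) (r : ℚ) (hxr : x ≤ (r : ℝ)) :
    rext f x ≤ (f r : ℝ) := by
  refine csSup_le (rext_set_nonempty f x) ?_
  rintro _ ⟨q, hq, rfl⟩
  have hqr : q ≤ r := by exact_mod_cast le_trans hq hxr
  show ((f q : ℚ) : ℝ) ≤ ((f r : ℚ) : ℝ)
  exact_mod_cast f.monotone hqr

lemma le_rext (f : ℚ ≃o ℚ) (x : ℝ) (q : ℚ) (hq : (q : ℝ) ≤ x) :
    (f q : ℝ) ≤ rext f x :=
  le_csSup (rext_set_bdd f x) ⟨q, hq, rfl⟩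

lemma rext_rat (f : ℚ ≃o ℚ) (q : ℚ) : rext f (q : ℝ) = (f q : ℝ) :=
  le_antisymm (rext_le f _ q le_rfl) (le_rext f _ q le_rfl)

lemma rext_strictMono (f : ℚ ≃o ℚ) : StrictMono (rext f) := by
  intro x y hxy
  obtain ⟨q, hq1, hq2⟩ := exists_rat_btwn hxy
  obtain ⟨r, hr1, hr2⟩ := exists_rat_btwn hq2
  have hqr : q < r := by exact_mod_cast hr1
  calc rext f x ≤ (f q : ℝ) := rext_le f x q hq1.le
    _ < (f r : ℝ) := by exact_mod_cast f.strictMono hqr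
    _ ≤ rext f y := le_rext f y r hr2.le

lemma rext_comp (f g : ℚ ≃o ℚ) (x : ℝ) :
    rext f (rext g x) = rext (g.trans f) x := by
  apply le_antisymm
  · refine csSup_le (rext_set_nonempty f _) ?_
    rintro _ ⟨q, hq, rfl⟩
    have hp : ((g.symm q : ℚ) : ℝ) ≤ x := by
      by_contra hcon
      push_neg at hcon
      obtain ⟨p, hp1, hp2⟩ := exists_rat_btwn hcon
      have hpq : p < g.symm q := by exact_mod_cast hp2
      have h1 : rext g x ≤ (g p : ℝ) := rext_le g x p hp1.le
      have h2 : g p < q := by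
        have := g.strictMono hpq
        rwa [g.apply_symm_apply] at this
      have : (q : ℝ) < (q : ℝ) :=
        lt_of_le_of_lt (hq.trans h1) (by exact_mod_cast h2)
      exact lt_irrefl _ this
    have := le_rext (g.trans f) x (g.symm q) hp
    simpa [OrderIso.trans_apply, g.apply_symm_apply] using this
  · refine csSup_le (rext_set_nonempty _ _) ?_
    rintro _ ⟨p, hp, rfl⟩
    have h1 : ((g p : ℚ) : ℝ) ≤ rext g x := le_rext g x p hp
    have := le_rext f (rext g x) (g p) h1
    simpa [OrderIso.trans_apply] using this

lemma rext_refl (x : ℝ) : rext (OrderIso.refl ℚ) x = x := by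
  apply le_antisymm
  · refine csSup_le (rext_set_nonempty _ _) ?_
    rintro _ ⟨q, hq, rfl⟩
    simpa using hq
  · refine le_of_forall_lt fun y hy => ?_
    obtain ⟨q, h1, h2⟩ := exists_rat_btwn hy
    have := le_rext (OrderIso.refl ℚ) x q h2.le
    simp only [OrderIso.refl_apply] at this
    exact lt_of_lt_of_le h1 this

lemma rext_congr {f g : ℚ ≃o ℚ} (h : ∀ q, f q = g q) : rext f = rext g := by
  have hfun : (fun q : ℚ => ((f q : ℝ))) = fun q : ℚ => ((g q : ℝ)) := by
    funext q; exact_mod_cast congrArg (fun r : ℚ => (r : ℝ)) (h q)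
  funext x
  unfold rext
  rw [hfun]

end CLOIE

open CLOIE in
theorem countable_left_orderable_iff_embeds {G : Type*} [Group G] [Countable G] :
    (∃ _ : LinearOrder G, ∀ a b c : G, b < c → a * b < a * c) ↔
    ∃ φ : G →* Equiv.Perm ℝ, Function.Injective ⇑φ ∧ ∀ g : G, StrictMono ⇑(φ g) := by
  constructor
  · rintro ⟨lo, hmul⟩
    letI := lo
    have sm : ∀ a : G, StrictMono (fun x : G => a * x) := fun a x y h => hmul a x y h
    haveI : Countable (G ×ₗ ℚ) := inferInstanceAs (Countable (G × ℚ))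
    haveI : Nonempty (G ×ₗ ℚ) := inferInstanceAs (Nonempty (G × ℚ))
    haveI : DenselyOrdered (G ×ₗ ℚ) := by
      constructor
      intro a b hab
      rcases Prod.Lex.lt_iff.mp hab with h | ⟨h1, h2⟩
      · obtain ⟨c, hc⟩ := exists_gt (ofLex a).2
        exact ⟨toLex ((ofLex a).1, c),
          Prod.Lex.lt_iff.mpr (Or.inr ⟨rfl, hc⟩),
          Prod.Lex.lt_iff.mpr (Or.inl h)⟩
      · obtain ⟨c, hc1, hc2⟩ := exists_between h2
        exact ⟨toLex ((ofLex a).1, c),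
          Prod.Lex.lt_iff.mpr (Or.inr ⟨rfl, hc1⟩),
          Prod.Lex.lt_iff.mpr (Or.inr ⟨h1, hc2⟩)⟩
    obtain ⟨e⟩ := Order.iso_of_countable_dense (α := G ×ₗ ℚ) (β := ℚ)
    -- the left translation action on `G ×ₗ ℚ`
    let A : G → (G ×ₗ ℚ) ≃o (G ×ₗ ℚ) := fun g =>
      { toFun := fun p => toLex (g * (ofLex p).1, (ofLex p).2)
        invFun := fun p => toLex (g⁻¹ * (ofLex p).1, (ofLex p).2)
        left_inv := fun p => by simp
        right_inv := fun p => by simp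
        map_rel_iff' := by
          intro p q
          show toLex (g * (ofLex p).1, (ofLex p).2) ≤ toLex (g * (ofLex q).1, (ofLex q).2)
            ↔ toLex (ofLex p) ≤ toLex (ofLex q)
          rw [Prod.Lex.le_iff, Prod.Lex.le_iff]
          simp [(sm g).lt_iff_lt, mul_right_inj] }
    have A_apply : ∀ (g : G) (p : G ×ₗ ℚ),
        A g p = toLex (g * (ofLex p).1, (ofLex p).2) := fun _ _ => rfl
    let f : G → ℚ ≃o ℚ := fun g => (e.symm.trans (A g)).trans e
    have f_apply : ∀ (g : G) (q : ℚ), f g q = e (A g (e.symm q)) := fun _ _ => rfl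
    have key : ∀ (g h : G) (q : ℚ), f (g * h) q = f g (f h q) := by
      intro g h q
      rw [f_apply, f_apply, f_apply, e.symm_apply_apply, A_apply, A_apply, A_apply]
      simp [mul_assoc]
    have key1 : ∀ q : ℚ, f 1 q = OrderIso.refl ℚ q := by
      intro q
      rw [f_apply, A_apply]
      simp
    let P : G → Equiv.Perm ℝ := fun g =>
      { toFun := rext (f g)
        invFun := rext (f g).symm
        left_inv := fun x => by
          rw [rext_comp, OrderIso.self_trans_symm, rext_refl]
        right_inv := fun x => by
          rw [rext_comp, OrderIso.symm_trans_self, rext_refl] }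
    have P_apply : ∀ (g : G) (x : ℝ), P g x = rext (f g) x := fun _ _ => rfl
    refine ⟨{ toFun := P, map_one' := ?_, map_mul' := ?_ }, ?_, ?_⟩
    · ext x
      show rext (f 1) x = x
      rw [rext_congr key1, rext_refl]
    · intro g h
      ext x
      show rext (f (g * h)) x = rext (f g) (rext (f h) x)
      rw [rext_comp]
      exact congrFun (rext_congr (fun q => key g h q)) x
    · intro g g' hgg'
      simp only [MonoidHom.coe_mk, OneHom.coe_mk] at hgg'
      have hq : ∀ q : ℚ, f g q = f g' q := by
        intro q
        have h1 : P g (q : ℝ) = P g' (q : ℝ) := by rw [hgg']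
        rw [P_apply, P_apply, rext_rat, rext_rat] at h1
        exact_mod_cast h1
      have h2 : A g (toLex (1, 0)) = A g' (toLex (1, 0)) := by
        have := hq (e (toLex (1, 0)))
        rw [f_apply, f_apply, e.symm_apply_apply] at this
        exact e.injective this
      rw [A_apply, A_apply] at h2
      have h3 : (g * 1, (0 : ℚ)) = (g' * 1, (0 : ℚ)) := toLex.injective h2
      have h4 : g * 1 = g' * 1 := congrArg Prod.fst h3
      rwa [mul_one, mul_one] at h4
    · intro g
      exact rext_strictMono (f g)
  · rintro ⟨φ, hinj, hmono⟩
    obtain ⟨lo, wf⟩ := exists_wellOrder WOR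
    letI := lo
    haveI := wf
    let i : G → Lex (WOR → ℝ) := fun g => toLex (fun x : WOR => φ g (show ℝ from x))
    have hi : Function.Injective i := by
      intro a b hab
      apply hinj
      apply Equiv.coe_fn_injective
      funext y
      exact congrFun (toLex.injective hab) (show WOR from y)
    refine ⟨LinearOrder.lift' i hi, fun a b c hbc => ?_⟩
    have h : Pi.Lex (· < ·) (fun {_} => (· < ·)) (fun x : WOR => φ b (show ℝ from x))
        (fun x : WOR => φ c (show ℝ from x)) := hbc
    obtain ⟨k, hk1, hk2⟩ := h
    show Pi.Lex (· < ·) (fun {_} => (· < ·)) (fun x : WOR => φ (a * b) (show ℝ from x))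
        (fun x : WOR => φ (a * c) (show ℝ from x))
    refine ⟨k, fun j hj => ?_, ?_⟩
    · show φ (a * b) (show ℝ from j) = φ (a * c) (show ℝ from j)
      rw [map_mul, map_mul, Equiv.Perm.mul_apply, Equiv.Perm.mul_apply]
      exact congrArg (φ a) (hk1 j hj)
    · show φ (a * b) (show ℝ from k) < φ (a * c) (show ℝ from k)
      rw [map_mul, map_mul, Equiv.Perm.mul_apply, Equiv.Perm.mul_apply]
      exact (hmono a) hk2
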